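/- Let (X,d) be a metric space, B the bornology of metrically bounded sets, and define A b B iff there exists ε > 0 such that for every bounded set D, d(A\D, B\D) < ε. Then (X,B,b) is a coarse proximity space. -/
import Mathlib


open Set

universe u
variable {X : Type u}

/-- The axioms of a coarse proximity structure: a bornology `B` (contains singletons,
closed under subsets and finite unions) and a relation `b` satisfying symmetry,
unboundedness of related sets, relatedness of sets with unbounded intersection,
the union axiom, and the strong axiom. -/
structure IsCoarseProximity (B : Set (Set X)) (b : Set X → Set X → Prop) : Prop where
  singleton_mem : ∀ x : X, {x} ∈ B
  subset_mem : ∀ A C : Set X, A ∈ B → C ⊆ A → C ∈ B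
  union_mem : ∀ A C : Set X, A ∈ B → C ∈ B → A ∪ C ∈ B
  symm : ∀ A C : Set X, b A C → b C A
  unbounded_of_rel : ∀ A C : Set X, b A C → A ∉ B ∧ C ∉ B
  rel_of_inter : ∀ A C : Set X, A ∩ C ∉ B → b A C
  union_iff : ∀ A C D : Set X, b (A ∪ C) D ↔ b A D ∨ b C D
  strong : ∀ A C : Set X, ¬ b A C → ∃ E : Set X, ¬ b A E ∧ ¬ b (univ \ E) C

/-- A coarse proximity space structure on `X`. -/
structure CoarseProximity (X : Type u) where
  B : Set (Set X)
  b : Set X → Set X → Prop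
  isCP : IsCoarseProximity B b

/-- The weak asymptotic resemblance induced by a coarse proximity. -/
def phi (cp : CoarseProximity X) (A C : Set X) : Prop :=
  (∀ C' ⊆ C, C' ∉ cp.B → cp.b A C') ∧ (∀ A' ⊆ A, A' ∉ cp.B → cp.b A' C)

/-- for a metric space `X`, the metrically bounded sets together with
`A b C ↔ ∃ ε > 0, ∀ bounded D, d(A \ D, C \ D) < ε` form a coarse proximity space.
(Here `d(S,T) < ε` with the convention `d(∅,T) = ∞` is expressed by the existence of
points `s ∈ S`, `t ∈ T` with `dist s t < ε`.) -/
theorem metric_isCoarseProximity {X : Type u} [MetricSpace X] :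
    IsCoarseProximity {S : Set X | Bornology.IsBounded S}
      (fun A C => ∃ ε > (0 : ℝ), ∀ D : Set X, Bornology.IsBounded D →
        ∃ a ∈ A \ D, ∃ c ∈ C \ D, dist a c < ε) := by

  constructor
  · intro x; exact Bornology.isBounded_singleton
  · intro A C hA hCA; exact hA.subset hCA
  · intro A C hA hC; exact hA.union hC
  · rintro A C ⟨ε, hε, h⟩
    exact ⟨ε, hε, fun D hD => by
      obtain ⟨a, ha, c, hc, hd⟩ := h D hD
      exact ⟨c, hc, a, ha, by rwa [dist_comm]⟩⟩
  · rintro A C ⟨ε, hε, h⟩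
    constructor
    · intro hA
      obtain ⟨a, ha, _⟩ := h A hA
      exact ha.2 ha.1
    · intro hC
      obtain ⟨a, _, c, hc, _⟩ := h C hC
      exact hc.2 hc.1
  · intro A C hAC
    refine ⟨1, one_pos, fun D hD => ?_⟩
    have hns : ¬ (A ∩ C ⊆ D) := fun h => hAC (hD.subset h)
    obtain ⟨x, hx, hxD⟩ := not_subset.mp hns
    exact ⟨x, ⟨hx.1, hxD⟩, x, ⟨hx.2, hxD⟩, by simp⟩
  · intro A C D
    constructor
    · rintro ⟨ε, hε, h⟩
      by_contra hcon
      push_neg at hcon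
      obtain ⟨h1, h2⟩ := hcon
      obtain ⟨D1, hD1, hA1⟩ := h1 ε hε
      obtain ⟨D2, hD2, hA2⟩ := h2 ε hε
      obtain ⟨a, ha, c, hc, hd⟩ := h (D1 ∪ D2) (hD1.union hD2)
      rcases ha.1 with hA | hC
      · exact absurd hd (not_lt.mpr (hA1 a ⟨hA, fun hm => ha.2 (Or.inl hm)⟩
          c ⟨hc.1, fun hm => hc.2 (Or.inl hm)⟩))
      · exact absurd hd (not_lt.mpr (hA2 a ⟨hC, fun hm => ha.2 (Or.inr hm)⟩
          c ⟨hc.1, fun hm => hc.2 (Or.inr hm)⟩))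
    · rintro (⟨ε, hε, h⟩ | ⟨ε, hε, h⟩)
      · exact ⟨ε, hε, fun E hE => by
          obtain ⟨a, ha, c, hc, hd⟩ := h E hE
          exact ⟨a, ⟨Or.inl ha.1, ha.2⟩, c, hc, hd⟩⟩
      · exact ⟨ε, hε, fun E hE => by
          obtain ⟨a, ha, c, hc, hd⟩ := h E hE
          exact ⟨a, ⟨Or.inr ha.1, ha.2⟩, c, hc, hd⟩⟩
  · intro A C h
    by_cases hA : Bornology.IsBounded A
    · refine ⟨univ, ?_, ?_⟩
      · rintro ⟨ε, hε, hb⟩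
        obtain ⟨a, ha, _⟩ := hb A hA
        exact ha.2 ha.1
      · rintro ⟨ε, hε, hb⟩
        obtain ⟨a, ha, _⟩ := hb ∅ Bornology.isBounded_empty
        exact ha.1.2 trivial
    by_cases hC : Bornology.IsBounded C
    · refine ⟨∅, ?_, ?_⟩
      · rintro ⟨ε, hε, hb⟩
        obtain ⟨a, _, c, hc, _⟩ := hb ∅ Bornology.isBounded_empty
        exact hc.1
      · rintro ⟨ε, hε, hb⟩
        obtain ⟨a, _, c, hc, _⟩ := hb C hC
        exact hc.2 hc.1
    push_neg at h
    have hAne : A.Nonempty := nonempty_iff_ne_empty.mpr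
      (fun he => hA (he ▸ Bornology.isBounded_empty))
    have hCne : C.Nonempty := nonempty_iff_ne_empty.mpr
      (fun he => hC (he ▸ Bornology.isBounded_empty))
    refine ⟨{x | Metric.infDist x C ≤ Metric.infDist x A}, ?_, ?_⟩
    · rintro ⟨ε, hε, hb⟩
      obtain ⟨D', hD', hsep⟩ := h (3 * ε) (by linarith)
      obtain ⟨a, ha, x, hx, hd⟩ := hb (Metric.cthickening (2 * ε) D')
        (hD'.cthickening)
      have hxA : Metric.infDist x A < ε := lt_of_le_of_lt
        (Metric.infDist_le_dist_of_mem ha.1) (by rwa [dist_comm])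
      have hxC : Metric.infDist x C < ε := lt_of_le_of_lt hx.1 hxA
      obtain ⟨c, hc, hxc⟩ := (Metric.infDist_lt_iff hCne).mp hxC
      have hcD' : c ∉ D' := fun hm =>
        hx.2 (Metric.mem_cthickening_of_dist_le x c _ _ hm
          (by linarith [hxc.le]))
      have haD' : a ∉ D' := fun hm =>
        ha.2 (Metric.self_subset_cthickening D' hm)
      have := hsep a ⟨ha.1, haD'⟩ c ⟨hc, hcD'⟩
      have : dist a c < 3 * ε := lt_of_le_of_lt (dist_triangle a x c) (by linarith)
      linarith [hsep a ⟨ha.1, haD'⟩ c ⟨hc, hcD'⟩]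
    · rintro ⟨ε, hε, hb⟩
      obtain ⟨D', hD', hsep⟩ := h (3 * ε) (by linarith)
      obtain ⟨x, hx, c, hc, hd⟩ := hb (Metric.cthickening (2 * ε) D')
        (hD'.cthickening)
      have hxE : Metric.infDist x A < Metric.infDist x C := by
        have := hx.1.2
        simpa [not_le] using this
      have hxA : Metric.infDist x A < ε :=
        lt_of_lt_of_le hxE (le_trans (Metric.infDist_le_dist_of_mem hc.1) hd.le)
      obtain ⟨a, ha, hxa⟩ := (Metric.infDist_lt_iff hAne).mp hxA
      have haD' : a ∉ D' := fun hm =>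
        hx.2 (Metric.mem_cthickening_of_dist_le x a _ _ hm
          (by linarith [hxa.le]))
      have hcD' : c ∉ D' := fun hm =>
        hc.2 (Metric.self_subset_cthickening D' hm)
      have hdac : dist a c < 3 * ε := by
        calc dist a c ≤ dist a x + dist x c := dist_triangle a x c
        _ < ε + ε := by rw [dist_comm a x]; exact add_lt_add hxa hd
        _ < 3 * ε := by linarith
      linarith [hsep a ⟨ha, haD'⟩ c ⟨hc.1, hcD'⟩]
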